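/- arXiv:2305.11748 — 2 statements merged into one kernel-verified Lean document; each statement's English description precedes it below -/
import Mathlib

section
/- Suppose $G$ is a copy of $C_{n,k}$ ($n \ge 3$, $k \ge 2$, between $2$ and $k$ leaves per center) whose blue set contains all center (cycle) vertices. Then Blue can complete the $\operatorname{Z}_q$-forcing game spending at most $k - q + q(k-1)$ additional tokens, i.e., $\operatorname{Z}_q(C_{n,k}, B) \le k - q + q(k-1)$ whenever $B$ contains all centers. -/
open SimpleGraph

namespace ZqGame

variable {V : Type*}

/-- A blue vertex `v` forces the white vertex `w`, where only white vertices in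
`Wallow` are taken into account (used for Rule 3, where play is restricted to the
subgraph induced by the blue set together with the returned white components). -/
def ForceIn (G : SimpleGraph V) (B : Set V) (Wallow : Set V) (v w : V) : Prop :=
  v ∈ B ∧ w ∉ B ∧ w ∈ Wallow ∧ G.Adj v w ∧
    ∀ u, G.Adj v u → u ∉ B → u ∈ Wallow → u = w

/-- The standard color change rule: `v` is blue and `w` is its unique white neighbor. -/
def Force (G : SimpleGraph V) (B : Set V) (v w : V) : Prop :=
  ForceIn G B Set.univ v w

/-- The white connected component of `G - B` containing the white vertex `w`. -/
def WhiteComp (G : SimpleGraph V) (B : Set V) (w : V) : Set V :=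
  {x | Relation.ReflTransGen (fun a b => G.Adj a b ∧ a ∉ B ∧ b ∉ B) w x}

/-- `W` is a white component, i.e. a connected component of `G - B`. -/
def IsWhiteComp (G : SimpleGraph V) (B : Set V) (W : Set V) : Prop :=
  ∃ w, w ∉ B ∧ W = WhiteComp G B w

/-- An active vertex: a blue vertex with at least two white neighbors. -/
def Active (G : SimpleGraph V) (B : Set V) (a : V) : Prop :=
  a ∈ B ∧ ∃ w₁ w₂, w₁ ≠ w₂ ∧ G.Adj a w₁ ∧ G.Adj a w₂ ∧ w₁ ∉ B ∧ w₂ ∉ B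

end ZqGame

namespace ZqGame

variable {V : Type*}

/-- `Win G q B t` : in the `Z_q`-forcing game on `G` starting from blue set `B`,
Blue has a strategy spending at most `t` tokens that colors every vertex blue
against any (adversarial) play by White.
* `all` : every vertex is already blue.
* `rule1` : spend one token to color an arbitrary vertex blue.
* `rule2` : a blue vertex with exactly one white neighbor forces it, for free.
* `rule3` : Blue announces a collection `𝒲` of at least `q + 1` white components;
  for every nonempty sub-collection `𝒮` that White may return, Blue can perform a
  Rule 2 force (`vf 𝒮 → wf 𝒮`) on the subgraph induced by `B` together with `⋃ 𝒮`,
  and continue from the resulting position. -/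
inductive Win (G : SimpleGraph V) (q : ℕ) : Set V → ℕ → Prop
  | all (B : Set V) (t : ℕ) : (∀ v, v ∈ B) → Win G q B t
  | rule1 (B : Set V) (t : ℕ) (v : V) : Win G q (insert v B) t → Win G q B (t + 1)
  | rule2 (B : Set V) (t : ℕ) (v w : V) :
      Force G B v w → Win G q (insert w B) t → Win G q B t
  | rule3 (B : Set V) (t : ℕ) (𝒲 : Finset (Set V))
      (vf wf : Finset (Set V) → V) :
      (∀ W ∈ 𝒲, IsWhiteComp G B W) → q + 1 ≤ 𝒲.card →
      (∀ 𝒮 : Finset (Set V), 𝒮 ⊆ 𝒲 → 𝒮.Nonempty →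
        ForceIn G B (⋃₀ (𝒮 : Set (Set V))) (vf 𝒮) (wf 𝒮)) →
      (∀ 𝒮 : Finset (Set V), 𝒮 ⊆ 𝒲 → 𝒮.Nonempty →
        Win G q (insert (wf 𝒮) B) t) →
      Win G q B t

/-- `Z_q(G, B)` : the minimum number of additional tokens Blue must spend to win the
`Z_q`-forcing game on `G` starting from blue set `B`. -/
noncomputable def cost (G : SimpleGraph V) (q : ℕ) (B : Set V) : ℕ :=
  sInf {t | Win G q B t}

/-- `Z_q(G)` : the `Z_q`-forcing number of `G`. -/
noncomputable def Zq (G : SimpleGraph V) (q : ℕ) : ℕ := cost G q ∅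

end ZqGame

namespace ZqGame

/-- Vertex type of a caterpillar cycle: `Sum.inl i` is the `i`-th center (cycle) vertex,
and `Sum.inr ⟨i, j⟩` is the `j`-th pendant leaf attached to center `i`, where center `i`
has `f i` pendant leaves. -/
abbrev CatVert (n : ℕ) (f : Fin n → ℕ) : Type := Fin n ⊕ (Σ i : Fin n, Fin (f i))

/-- The caterpillar cycle obtained from the cycle `C_n` by attaching `f i` pendant
leaves to the `i`-th cycle vertex. -/
def catCycle (n : ℕ) (f : Fin n → ℕ) : SimpleGraph (CatVert n f) :=
  SimpleGraph.fromRel (fun x y =>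
    match x, y with
    | Sum.inl i, Sum.inl j => ((i : ℕ) + 1) % n = (j : ℕ)
    | Sum.inl i, Sum.inr l => i = l.1
    | _, _ => False)

end ZqGame

namespace ZqGame

open SimpleGraph Finset

lemma Win.mono {V : Type*} {G : SimpleGraph V} {q : ℕ} {B : Set V} {t t' : ℕ}
    (h : Win G q B t) (htt : t ≤ t') : Win G q B t' := by
  induction h generalizing t' with
  | all B t h => exact .all B t' h
  | rule1 B t v h ih =>
      have h2 : t' = (t' - 1) + 1 := by omega
      rw [h2]; exact .rule1 B (t' - 1) v (ih (by omega))
  | rule2 B t v w hf h ih => exact .rule2 B t' v w hf (ih htt)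
  | rule3 B t 𝒲 vf wf h1 h2 h3 h4 ih =>
      exact .rule3 B t' 𝒲 vf wf h1 h2 h3 (fun 𝒮 hs hns => ih 𝒮 hs hns htt)

variable {n : ℕ} {f : Fin n → ℕ}

lemma adj_inl_inr {i j : Fin n} {a : Fin (f j)} :
    (catCycle n f).Adj (Sum.inl i) (Sum.inr ⟨j, a⟩) ↔ i = j := by
  simp [catCycle, SimpleGraph.fromRel_adj]

lemma eq_center_of_adj_leaf {i : Fin n} {a : Fin (f i)} {x : CatVert n f}
    (h : (catCycle n f).Adj x (Sum.inr ⟨i, a⟩)) : x = Sum.inl i := by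
  cases x with
  | inl j =>
      have : j = i := by simpa [catCycle, SimpleGraph.fromRel_adj] using h
      rw [this]
  | inr l =>
      exfalso
      obtain ⟨l1, l2⟩ := l
      simp [catCycle, SimpleGraph.fromRel_adj] at h

open Classical in
/-- The white leaves attached to center `i`. -/
noncomputable def wl (B : Set (CatVert n f)) (i : Fin n) : Finset (Fin (f i)) :=
  Finset.univ.filter (fun a => Sum.inr ⟨i, a⟩ ∉ B)

/-- Total number of white leaves. -/
noncomputable def Tc (B : Set (CatVert n f)) : ℕ := ∑ i, (wl B i).card

/-- Potential: tokens needed ignoring Rule 3. -/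
noncomputable def Phi (B : Set (CatVert n f)) : ℕ := ∑ i, ((wl B i).card - 1)

lemma mem_wl {B : Set (CatVert n f)} {i : Fin n} {a : Fin (f i)} :
    a ∈ wl B i ↔ Sum.inr ⟨i, a⟩ ∉ B := by
  classical simp [wl]

lemma wl_insert_ne {B : Set (CatVert n f)} {i j : Fin n} (hne : j ≠ i) (a : Fin (f i)) :
    wl (insert (Sum.inr ⟨i, a⟩) B) j = wl B j := by
  ext b
  simp only [mem_wl, Set.mem_insert_iff]
  constructor
  · intro h hb; exact h (Or.inr hb)
  · rintro h (h1 | h2)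
    · exact hne (by injection h1 with h1'; exact (Sigma.mk.inj_iff.mp h1').1)
    · exact h h2

lemma wl_insert_self {B : Set (CatVert n f)} {i : Fin n} (a : Fin (f i)) :
    wl (insert (Sum.inr ⟨i, a⟩) B) i = (wl B i).erase a := by
  ext b
  simp only [mem_wl, Set.mem_insert_iff, Finset.mem_erase]
  constructor
  · intro h
    refine ⟨fun hba => h (Or.inl (by rw [hba])), fun hb => h (Or.inr hb)⟩
  · rintro ⟨h1, h2⟩ (h3 | h4)
    · injection h3 with h3'
      exact h1 (eq_of_heq (Sigma.mk.inj_iff.mp h3').2)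
    · exact h2 h4

lemma wl_insert_subset {B : Set (CatVert n f)} {i : Fin n} (a : Fin (f i)) (j : Fin n) :
    wl (insert (Sum.inr ⟨i, a⟩) B) j ⊆ wl B j := by
  intro b hb
  rw [mem_wl] at hb ⊢
  exact fun h => hb (Set.mem_insert_of_mem _ h)

lemma Tc_insert_lt {B : Set (CatVert n f)} {i : Fin n} {a : Fin (f i)}
    (ha : a ∈ wl B i) : Tc (insert (Sum.inr ⟨i, a⟩) B) < Tc B := by
  apply Finset.sum_lt_sum
  · exact fun j _ => Finset.card_le_card (wl_insert_subset a j)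
  · refine ⟨i, Finset.mem_univ i, ?_⟩
    rw [wl_insert_self]
    exact Finset.card_lt_card (Finset.erase_ssubset ha)

lemma Phi_insert_le {B : Set (CatVert n f)} (i : Fin n) (a : Fin (f i)) :
    Phi (insert (Sum.inr ⟨i, a⟩) B) ≤ Phi B := by
  apply Finset.sum_le_sum
  intro j _
  exact Nat.sub_le_sub_right (Finset.card_le_card (wl_insert_subset a j)) 1

lemma Phi_insert_lt {B : Set (CatVert n f)} {i : Fin n} {a : Fin (f i)}
    (ha : a ∈ wl B i) (h2 : 2 ≤ (wl B i).card) :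
    Phi (insert (Sum.inr ⟨i, a⟩) B) < Phi B := by
  apply Finset.sum_lt_sum
  · exact fun j _ => Nat.sub_le_sub_right (Finset.card_le_card (wl_insert_subset a j)) 1
  · refine ⟨i, Finset.mem_univ i, ?_⟩
    rw [wl_insert_self]
    rw [Finset.card_erase_of_mem ha]
    omega

lemma allBlue_of_Tc_eq_zero {B : Set (CatVert n f)} (hB : ∀ i, Sum.inl i ∈ B)
    (hT : Tc B = 0) : ∀ v : CatVert n f, v ∈ B := by
  intro v
  cases v with
  | inl i => exact hB i
  | inr l =>
      obtain ⟨i, a⟩ := l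
      by_contra hv
      have h1 : a ∈ wl B i := mem_wl.mpr hv
      have h2 : (wl B i).card = 0 := by
        have := Finset.sum_eq_zero_iff.mp hT i (Finset.mem_univ i)
        exact this
      simp [Finset.card_eq_zero.mp h2] at h1
lemma whiteComp_leaf {B : Set (CatVert n f)} (hB : ∀ i, Sum.inl i ∈ B)
    {i : Fin n} {a : Fin (f i)} :
    WhiteComp (catCycle n f) B (Sum.inr ⟨i, a⟩) = {Sum.inr ⟨i, a⟩} := by
  ext x
  simp only [WhiteComp, Set.mem_setOf_eq, Set.mem_singleton_iff]
  constructor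
  · intro h
    rcases (Relation.ReflTransGen.cases_head h) with h1 | ⟨c, ⟨hadj, _, hc⟩, _⟩
    · exact h1.symm
    · exfalso
      have := eq_center_of_adj_leaf hadj.symm
      exact hc (this ▸ hB i)
  · rintro rfl; exact Relation.ReflTransGen.refl

lemma force_of_unique {B : Set (CatVert n f)} (hB : ∀ i, Sum.inl i ∈ B)
    {i : Fin n} {a : Fin (f i)} (ha : wl B i = {a}) :
    Force (catCycle n f) B (Sum.inl i) (Sum.inr ⟨i, a⟩) := by
  have hamem : a ∈ wl B i := by rw [ha]; exact Finset.mem_singleton_self a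
  refine ⟨hB i, mem_wl.mp hamem, Set.mem_univ _, adj_inl_inr.mpr rfl, ?_⟩
  intro u hu hub _
  cases u with
  | inl j => exact absurd (hB j) hub
  | inr l =>
      obtain ⟨j, b⟩ := l
      have hij : i = j := adj_inl_inr.mp hu
      subst hij
      have : b ∈ wl B i := mem_wl.mpr hub
      rw [ha, Finset.mem_singleton] at this
      rw [this]
lemma main_win (k q : ℕ) (hn : 3 ≤ n) (hf2 : ∀ i, 2 ≤ f i) (hfk : ∀ i, f i ≤ k) :
    ∀ (N : ℕ) (B : Set (CatVert n f)), (∀ i, Sum.inl i ∈ B) → Tc B ≤ N →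
      Win (catCycle n f) q B (min (Phi B) (q * (k - 1))) := by
  intro N
  induction N with
  | zero =>
      intro B hB hT
      exact Win.all B _ (allBlue_of_Tc_eq_zero hB (Nat.le_zero.mp hT))
  | succ N ih =>
      intro B hB hT
      classical
      by_cases hT0 : Tc B = 0
      · exact Win.all B _ (allBlue_of_Tc_eq_zero hB hT0)
      have hnpos : 0 < n := by omega
      by_cases hm : q + 1 ≤ (Finset.univ.filter fun i : Fin n => (wl B i).Nonempty).card
      · -- Rule 3 case
        obtain ⟨S, hSsub, hScard⟩ := Finset.exists_subset_card_eq hm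
        have hSwhite : ∀ i ∈ S, (wl B i).Nonempty := fun i hi =>
          (Finset.mem_filter.mp (hSsub hi)).2
        have hach : ∀ i : Fin n, ∃ b : Fin (f i), i ∈ S → b ∈ wl B i := by
          intro i
          by_cases h : (wl B i).Nonempty
          · exact ⟨h.choose, fun _ => h.choose_spec⟩
          · exact ⟨⟨0, by have := hf2 i; omega⟩, fun hi => absurd (hSwhite i hi) h⟩
        choose a ha using hach
        set 𝒲 : Finset (Set (CatVert n f)) :=
          S.image (fun i => ({Sum.inr ⟨i, a i⟩} : Set (CatVert n f))) with h𝒲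
        have h𝒲card : 𝒲.card = q + 1 := by
          rw [h𝒲, Finset.card_image_of_injOn, hScard]
          intro i _ j _ h
          have h' := Set.singleton_eq_singleton_iff.mp h
          injection h' with h''
          exact (Sigma.mk.inj_iff.mp h'').1
        have hidxch : ∀ 𝒮 : Finset (Set (CatVert n f)), ∃ i : Fin n,
            𝒮 ⊆ 𝒲 → 𝒮.Nonempty →
              i ∈ S ∧ ({Sum.inr ⟨i, a i⟩} : Set (CatVert n f)) ∈ 𝒮 := by
          intro 𝒮
          by_cases h : 𝒮 ⊆ 𝒲 ∧ 𝒮.Nonempty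
          · obtain ⟨W, hW⟩ := h.2
            have hW𝒲 := h.1 hW
            rw [h𝒲] at hW𝒲
            obtain ⟨i, hiS, hiW⟩ := Finset.mem_image.mp hW𝒲
            exact ⟨i, fun _ _ => ⟨hiS, hiW ▸ hW⟩⟩
          · exact ⟨⟨0, hnpos⟩, fun h1 h2 => absurd ⟨h1, h2⟩ h⟩
        choose idx hidx using hidxch
        apply Win.rule3 B _ 𝒲 (fun 𝒮 => Sum.inl (idx 𝒮))
          (fun 𝒮 => Sum.inr ⟨idx 𝒮, a (idx 𝒮)⟩)
        · intro W hW
          rw [h𝒲] at hW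
          obtain ⟨i, hiS, rfl⟩ := Finset.mem_image.mp hW
          exact ⟨Sum.inr ⟨i, a i⟩, mem_wl.mp (ha i hiS), (whiteComp_leaf hB).symm⟩
        · rw [h𝒲card]
        · intro 𝒮 hs hns
          obtain ⟨hiS, hi𝒮⟩ := hidx 𝒮 hs hns
          refine ⟨hB _, mem_wl.mp (ha _ hiS),
            Set.mem_sUnion.mpr ⟨{Sum.inr ⟨idx 𝒮, a (idx 𝒮)⟩}, Finset.mem_coe.mpr hi𝒮,
              Set.mem_singleton _⟩,
            adj_inl_inr.mpr rfl, ?_⟩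
          intro u hu hub huS
          obtain ⟨W, hW𝒮, huW⟩ := Set.mem_sUnion.mp huS
          have hW𝒲 := hs (Finset.mem_coe.mp hW𝒮)
          rw [h𝒲] at hW𝒲
          obtain ⟨j, hjS, rfl⟩ := Finset.mem_image.mp hW𝒲
          rw [Set.mem_singleton_iff] at huW
          subst huW
          have hij : idx 𝒮 = j := adj_inl_inr.mp hu
          rw [hij]
        · intro 𝒮 hs hns
          obtain ⟨hiS, _⟩ := hidx 𝒮 hs hns
          have haw := ha _ hiS
          have hB' : ∀ i, Sum.inl i ∈ insert (Sum.inr ⟨idx 𝒮, a (idx 𝒮)⟩) B :=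
            fun i => Set.mem_insert_of_mem _ (hB i)
          have hT' : Tc (insert (Sum.inr ⟨idx 𝒮, a (idx 𝒮)⟩) B) ≤ N := by
            have := Tc_insert_lt haw; omega
          exact (ih _ hB' hT').mono (min_le_min (Phi_insert_le _ _) le_rfl)
      · -- few active centers: Rules 1 and 2 suffice
        push_neg at hm
        have hPhile : Phi B ≤ q * (k - 1) := by
          have h1 : Phi B = ∑ i ∈ Finset.univ.filter (fun i : Fin n => (wl B i).Nonempty),
              ((wl B i).card - 1) := by
            symm
            apply Finset.sum_subset (Finset.filter_subset _ _)
            intro i _ hi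
            rw [Finset.mem_filter] at hi
            push_neg at hi
            have := hi (Finset.mem_univ i)
            have this : wl B i = ∅ := this
            simp [this]
          rw [h1]
          calc ∑ i ∈ Finset.univ.filter (fun i : Fin n => (wl B i).Nonempty),
                ((wl B i).card - 1)
              ≤ ∑ _i ∈ Finset.univ.filter (fun i : Fin n => (wl B i).Nonempty), (k - 1) := by
                apply Finset.sum_le_sum
                intro i _
                have hc : (wl B i).card ≤ f i := by
                  have := Finset.card_le_card (Finset.subset_univ (wl B i))
                  simpa using this
                have := hfk i; omega
            _ = (Finset.univ.filter fun i : Fin n => (wl B i).Nonempty).card * (k - 1) := by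
                rw [Finset.sum_const, smul_eq_mul]
            _ ≤ q * (k - 1) := Nat.mul_le_mul_right _ (by omega)
        rw [min_eq_left hPhile]
        by_cases h2 : ∃ i, 2 ≤ (wl B i).card
        · obtain ⟨i, hi2⟩ := h2
          obtain ⟨b, hb⟩ := Finset.card_pos.mp (by omega : 0 < (wl B i).card)
          have hlt := Phi_insert_lt hb hi2
          have hB' : ∀ j, Sum.inl j ∈ insert (Sum.inr ⟨i, b⟩) B :=
            fun j => Set.mem_insert_of_mem _ (hB j)
          have hT' : Tc (insert (Sum.inr ⟨i, b⟩) B) ≤ N := by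
            have := Tc_insert_lt hb; omega
          have hwin := (ih _ hB' hT').mono
            (le_trans (min_le_left _ _) (by omega : Phi (insert (Sum.inr ⟨i, b⟩) B) ≤ Phi B - 1))
          have heq : Phi B = (Phi B - 1) + 1 := by omega
          rw [heq]
          exact Win.rule1 B (Phi B - 1) (Sum.inr ⟨i, b⟩) hwin
        · push_neg at h2
          have hone : ∃ i, (wl B i).card = 1 := by
            by_contra hall
            push_neg at hall
            apply hT0
            apply Finset.sum_eq_zero
            intro i _
            have := h2 i
            have := hall i
            omega
          obtain ⟨i, hi1⟩ := hone
          obtain ⟨b, hb⟩ := Finset.card_eq_one.mp hi1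
          have hforce := force_of_unique hB hb
          have hbw : b ∈ wl B i := by rw [hb]; exact Finset.mem_singleton_self b
          have hB' : ∀ j, Sum.inl j ∈ insert (Sum.inr ⟨i, b⟩) B :=
            fun j => Set.mem_insert_of_mem _ (hB j)
          have hT' : Tc (insert (Sum.inr ⟨i, b⟩) B) ≤ N := by
            have := Tc_insert_lt hbw; omega
          refine Win.rule2 B _ _ _ hforce ?_
          exact (ih _ hB' hT').mono (le_trans (min_le_left _ _) (Phi_insert_le _ _))

end ZqGame


open SimpleGraph

/-- If all centers of a caterpillar cycle `C_{n,k}` are blue, then Blue can finish the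
`Z_q`-forcing game spending at most `k - q + q * (k - 1)` additional tokens. -/
theorem cost_catCycle_all_centers_blue (n k q : ℕ) (hn : 3 ≤ n) (hk : 2 ≤ k)
    (f : Fin n → ℕ) (hf : ∀ i, 2 ≤ f i ∧ f i ≤ k)
    (B : Set (ZqGame.CatVert n f)) (hB : ∀ i : Fin n, Sum.inl i ∈ B) :
    ZqGame.cost (ZqGame.catCycle n f) q B ≤ k - q + q * (k - 1) := by
  apply Nat.sInf_le
  have hwin := ZqGame.main_win k q hn (fun i => (hf i).1) (fun i => (hf i).2)
    (ZqGame.Tc B) B hB le_rfl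
  exact hwin.mono (le_trans (min_le_right _ _) (Nat.le_add_left _ _))
end

section
/- In the $\operatorname{Z}_2$-forcing game on $C_{n,k}$ (with White following the protected-path strategy), if Blue spends a token to transition from game state $H_{i-1}$ to $H_i$, then $\varphi(H_i) \ge \frac{\varphi(H_{i-1}) - 1}{2}$, where $\varphi$ is the maximum number of good internal centers over all protected paths. -/
set_option linter.unusedSectionVars false

namespace ZqGame

variable {n : ℕ} [NeZero n] {f : Fin n → ℕ}

open Fin.NatCast

/-- A center is bad if it is blue or has a blue degree-one (pendant) neighbor. -/
def IsBadCenter (B : Set (CatVert n f)) (i : Fin n) : Prop :=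
  Sum.inl i ∈ B ∨ ∃ j : Fin (f i), Sum.inr ⟨i, j⟩ ∈ B

/-- Center `i` has at least one white pendant neighbor. -/
def HasWhiteLeaf (B : Set (CatVert n f)) (i : Fin n) : Prop :=
  ∃ j : Fin (f i), Sum.inr ⟨i, j⟩ ∉ B

/-- The path of centers `s, s+1, …, s+(m-1)` (indices mod `n`) is protected:
it has at least two centers, every center on it has a white pendant neighbor,
and only its two endpoints may be bad. -/
def IsProtected (B : Set (CatVert n f)) (s : Fin n) (m : ℕ) : Prop :=
  2 ≤ m ∧ m ≤ n ∧ (∀ t : ℕ, t < m → HasWhiteLeaf B (s + (t : Fin n))) ∧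
    ∀ t : ℕ, 0 < t → t + 1 < m → ¬ IsBadCenter B (s + (t : Fin n))

/-- `φ` of a game state: the maximum number `m - 2` of guaranteed good (internal)
centers over all protected paths (`0` if there is no protected path). -/
noncomputable def phi (B : Set (CatVert n f)) : ℕ :=
  sSup {d | ∃ s m, IsProtected B s m ∧ d = m - 2}

end ZqGame

namespace ZqGame

variable {n : ℕ} [NeZero n] {f : Fin n → ℕ}

open Fin.NatCast

/-- The center vertex that the newly blued vertex `u` is at or attached to. -/
def centerOf : CatVert n f → Fin n := Sum.elim id Sigma.fst

lemma badCenter_insert {B : Set (CatVert n f)} {u : CatVert n f} {j : Fin n}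
    (h : IsBadCenter (insert u B) j) : IsBadCenter B j ∨ j = centerOf u := by
  rcases h with h | ⟨l, hl⟩
  · rcases Set.mem_insert_iff.1 h with h | h
    · right; rw [← h]; rfl
    · exact Or.inl (Or.inl h)
  · rcases Set.mem_insert_iff.1 hl with h | h
    · right; rw [← h]; rfl
    · exact Or.inl (Or.inr ⟨l, h⟩)

lemma whiteLeaf_insert_of_ne {B : Set (CatVert n f)} {u : CatVert n f} {j : Fin n}
    (hj : j ≠ centerOf u) (h : HasWhiteLeaf B j) : HasWhiteLeaf (insert u B) j := by
  obtain ⟨l, hl⟩ := h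
  refine ⟨l, fun hc => ?_⟩
  rcases Set.mem_insert_iff.1 hc with h | h
  · apply hj; rw [← h]; rfl
  · exact hl h

lemma whiteLeaf_insert_of_not_bad {B : Set (CatVert n f)} {u : CatVert n f} {j : Fin n}
    (hf : 2 ≤ f j) (hnb : ¬ IsBadCenter B j) : HasWhiteLeaf (insert u B) j := by
  have hmem : ∀ l : Fin (f j), (Sum.inr ⟨j, l⟩ : CatVert n f) ∉ B := by
    intro l hl; exact hnb (Or.inr ⟨l, hl⟩)
  have hex : ∃ l : Fin (f j), (Sum.inr ⟨j, l⟩ : CatVert n f) ≠ u := by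
    match u with
    | Sum.inl i => exact ⟨⟨0, by omega⟩, by simp⟩
    | Sum.inr ⟨i, j'⟩ =>
      by_cases hij : i = j
      · subst hij
        obtain ⟨l, hl⟩ := Fintype.exists_ne_of_one_lt_card (by rw [Fintype.card_fin]; omega) j'
        refine ⟨l, fun hc => ?_⟩
        apply hl
        have := Sum.inr.inj hc
        simpa using this
      · exact ⟨⟨0, by omega⟩, fun hc => hij (by
          have := Sum.inr.inj hc
          exact (congrArg Sigma.fst this).symm)⟩
  obtain ⟨l, hl⟩ := hex
  refine ⟨l, fun hc => ?_⟩
  rcases Set.mem_insert_iff.1 hc with h | h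
  · exact hl h
  · exact hmem l h

lemma fin_add_cast_inj {s : Fin n} {t t' : ℕ} (ht : t < n) (ht' : t' < n)
    (h : s + (t : Fin n) = s + (t' : Fin n)) : t = t' := by
  have h2 : (t : Fin n) = (t' : Fin n) := add_left_cancel h
  have := congrArg Fin.val h2
  rwa [Fin.val_cast_of_lt ht, Fin.val_cast_of_lt ht'] at this

lemma le_phi {B : Set (CatVert n f)} {s : Fin n} {m : ℕ}
    (h : IsProtected B s m) : m - 2 ≤ phi B := by
  apply le_csSup
  · refine ⟨n, ?_⟩
    rintro d ⟨s', m', ⟨_, hmn, _, _⟩, rfl⟩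
    omega
  · exact ⟨s, m, h, rfl⟩

lemma phi_key (hf : ∀ i, 2 ≤ f i) (B : Set (CatVert n f)) (u : CatVert n f) :
    phi B ≤ 2 * phi (insert u B) + 1 := by
  by_cases hne : {d | ∃ s m, IsProtected B s m ∧ d = m - 2}.Nonempty
  swap
  · rw [phi, Set.not_nonempty_iff_eq_empty.1 hne, csSup_empty]
    simp
  by_cases h2 : phi B ≤ 1
  · omega
  have hmem : phi B ∈ {d | ∃ s m, IsProtected B s m ∧ d = m - 2} := by
    apply Nat.sSup_mem hne
    refine ⟨n, ?_⟩
    rintro d ⟨s', m', ⟨_, hmn, _, _⟩, rfl⟩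
    omega
  obtain ⟨s, m, ⟨hm2, hmn, hwhite, hgood⟩, hphi⟩ := hmem
  have hm4 : 4 ≤ m := by omega
  set i0 := centerOf u with hi0
  suffices h : ∃ s' m', IsProtected (insert u B) s' m' ∧ m - 2 ≤ 2 * (m' - 2) + 1 by
    obtain ⟨s', m', hP', hb⟩ := h
    have := le_phi hP'
    omega
  by_cases hC : ∃ t, t < m ∧ s + (t : Fin n) = i0
  swap
  · refine ⟨s, m, ⟨hm2, hmn, ?_, ?_⟩, by omega⟩
    · intro t ht
      exact whiteLeaf_insert_of_ne (fun heq => hC ⟨t, ht, heq⟩) (hwhite t ht)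
    · intro t ht0 ht1 hb
      rcases badCenter_insert hb with hb | hb
      · exact hgood t ht0 ht1 hb
      · exact hC ⟨t, by omega, hb⟩
  obtain ⟨t0, ht0m, ht0eq⟩ := hC
  have hne_t : ∀ t, t < m → t ≠ t0 → s + (t : Fin n) ≠ i0 := by
    intro t ht htne heq
    rw [← ht0eq] at heq
    exact htne (fin_add_cast_inj (by omega) (by omega) heq)
  by_cases ht00 : t0 = 0
  · subst ht00
    by_cases hw : HasWhiteLeaf (insert u B) i0
    · refine ⟨s, m, ⟨hm2, hmn, ?_, ?_⟩, by omega⟩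
      · intro t ht
        by_cases h : t = 0
        · subst h; rw [ht0eq]; exact hw
        · exact whiteLeaf_insert_of_ne (hne_t t ht h) (hwhite t ht)
      · intro t htp ht1 hb
        rcases badCenter_insert hb with hb | hb
        · exact hgood t htp ht1 hb
        · exact hne_t t (by omega) (by omega) hb
    · have hshift : ∀ t : ℕ, (s + 1) + (t : Fin n) = s + ((t + 1 : ℕ) : Fin n) := by
        intro t; push_cast; abel
      refine ⟨s + 1, m - 1, ⟨by omega, by omega, ?_, ?_⟩, by omega⟩
      · intro t ht
        rw [hshift]
        exact whiteLeaf_insert_of_ne (hne_t (t + 1) (by omega) (by omega))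
          (hwhite (t + 1) (by omega))
      · intro t htp ht1 hb
        rw [hshift] at hb
        rcases badCenter_insert hb with hb | hb
        · exact hgood (t + 1) (by omega) (by omega) hb
        · exact hne_t (t + 1) (by omega) (by omega) hb
  by_cases ht0l : t0 = m - 1
  · subst ht0l
    by_cases hw : HasWhiteLeaf (insert u B) i0
    · refine ⟨s, m, ⟨hm2, hmn, ?_, ?_⟩, by omega⟩
      · intro t ht
        by_cases h : t = m - 1
        · subst h; rw [ht0eq]; exact hw
        · exact whiteLeaf_insert_of_ne (hne_t t ht h) (hwhite t ht)
      · intro t htp ht1 hb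
        rcases badCenter_insert hb with hb | hb
        · exact hgood t htp ht1 hb
        · exact hne_t t (by omega) (by omega) hb
    · refine ⟨s, m - 1, ⟨by omega, by omega, ?_, ?_⟩, by omega⟩
      · intro t ht
        exact whiteLeaf_insert_of_ne (hne_t t (by omega) (by omega)) (hwhite t (by omega))
      · intro t htp ht1 hb
        rcases badCenter_insert hb with hb | hb
        · exact hgood t htp (by omega) hb
        · exact hne_t t (by omega) (by omega) hb
  -- interior case
  have hint : 0 < t0 ∧ t0 + 1 < m := by omega
  have hnb : ¬ IsBadCenter B i0 := by
    rw [← ht0eq]; exact hgood t0 hint.1 hint.2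
  have hwi0 : HasWhiteLeaf (insert u B) i0 := whiteLeaf_insert_of_not_bad (hf i0) hnb
  by_cases hlong : m - t0 ≤ t0 + 1
  · refine ⟨s, t0 + 1, ⟨by omega, by omega, ?_, ?_⟩, by omega⟩
    · intro t ht
      by_cases h : t = t0
      · subst h; rw [ht0eq]; exact hwi0
      · exact whiteLeaf_insert_of_ne (hne_t t (by omega) h) (hwhite t (by omega))
    · intro t htp ht1 hb
      rcases badCenter_insert hb with hb | hb
      · exact hgood t htp (by omega) hb
      · exact hne_t t (by omega) (by omega) hb
  · have hshift : ∀ t : ℕ, (s + (t0 : Fin n)) + (t : Fin n) = s + ((t0 + t : ℕ) : Fin n) := by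
      intro t; push_cast; abel
    refine ⟨s + (t0 : Fin n), m - t0, ⟨by omega, by omega, ?_, ?_⟩, by omega⟩
    · intro t ht
      rw [hshift]
      by_cases h : t = 0
      · subst h
        rw [show t0 + 0 = t0 from rfl, ht0eq]; exact hwi0
      · exact whiteLeaf_insert_of_ne (hne_t (t0 + t) (by omega) (by omega))
          (hwhite (t0 + t) (by omega))
    · intro t htp ht1 hb
      rw [hshift] at hb
      rcases badCenter_insert hb with hb | hb
      · exact hgood (t0 + t) (by omega) (by omega) hb
      · exact hne_t (t0 + t) (by omega) (by omega) hb

end ZqGame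

open SimpleGraph

/-- In the `Z_2`-forcing game on a caterpillar cycle `C_{n,k}` (each center has between
`2` and `k` pendant leaves), if Blue spends a token, i.e. a single additional vertex
`u` is colored blue, then the potential `φ` (the maximum number of guaranteed good
centers over all protected paths) satisfies `φ(H_i) ≥ (φ(H_{i-1}) - 1) / 2`. -/
theorem phi_decrease_half (n k : ℕ) [NeZero n] (hn : 3 ≤ n) (hk : 2 ≤ k)
    (f : Fin n → ℕ) (hf : ∀ i, 2 ≤ f i ∧ f i ≤ k)
    (B : Set (ZqGame.CatVert n f)) (u : ZqGame.CatVert n f) :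
    ((ZqGame.phi B : ℝ) - 1) / 2 ≤ (ZqGame.phi (insert u B) : ℝ) := by
  have key := ZqGame.phi_key (fun i => (hf i).1) B u
  have : (ZqGame.phi B : ℝ) ≤ 2 * (ZqGame.phi (insert u B) : ℝ) + 1 := by
    exact_mod_cast key
  linarith
end
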